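/- Let (T, B) and (T̃, B̃) be regular boundary problems with signal operators G, G̃ and state operators H, H̃. Then the state operator of the product (T T̃, B·T̃ + B̃) sends boundary data decomposed as B₀ + B̃₀ (with B₀ supported on B·T̃ and B̃₀ on B̃) to u = G̃ H(B₀ ∘ T̃*^{-1}) + H̃(B̃₀); i.e., u satisfies T T̃ u = 0, β(T̃ u) = B₀(β∘T̃) for all β ∈ B, and β̃(u) = B̃₀(β̃) for all β̃ ∈ B̃. -/
import Mathlib


/-- The trace map `V → C*` sending `v` to the functional `γ ↦ γ(v)`. -/
noncomputable def trc {K V : Type*} [Field K] [AddCommGroup V] [Module K V]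
    (C : Submodule K (Module.Dual K V)) : V →ₗ[K] Module.Dual K C :=
  (C.subtype.dualMap).comp (Module.Dual.eval K V)

theorem product_state_operator
    {K F 𝒢 ℋ : Type*} [Field K]
    [AddCommGroup F] [Module K F] [AddCommGroup 𝒢] [Module K 𝒢]
    [AddCommGroup ℋ] [Module K ℋ]
    (T' : F →ₗ[K] 𝒢) (hT' : Function.Surjective T')
    (T : 𝒢 →ₗ[K] ℋ) (hT : Function.Surjective T)
    (B : Submodule K (Module.Dual K 𝒢)) (B' : Submodule K (Module.Dual K F))
    (hcl : B.dualCoannihilator.dualAnnihilator = B)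
    (hcl' : B'.dualCoannihilator.dualAnnihilator = B')
    (hreg : IsCompl (LinearMap.ker T) B.dualCoannihilator)
    (hreg' : IsCompl (LinearMap.ker T') B'.dualCoannihilator)
    -- signal operator of (T', B')
    (G' : 𝒢 →ₗ[K] F) (hG'1 : T'.comp G' = LinearMap.id)
    (hG'2 : LinearMap.range G' = B'.dualCoannihilator)
    -- state operator of (T, B)
    (H : ↥(LinearMap.range (trc B)) →ₗ[K] 𝒢)
    (hH : ∀ b : ↥(LinearMap.range (trc B)),
      T (H b) = 0 ∧ ∀ β : B, (β : Module.Dual K 𝒢) (H b) = (b : Module.Dual K B) β)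
    -- state operator of (T', B')
    (H' : ↥(LinearMap.range (trc B')) →ₗ[K] F)
    (hH' : ∀ b : ↥(LinearMap.range (trc B')),
      T' (H' b) = 0 ∧ ∀ β : B', (β : Module.Dual K F) (H' b) = (b : Module.Dual K B') β) :
    ∀ (b : ↥(LinearMap.range (trc B))) (b' : ↥(LinearMap.range (trc B'))),
      T (T' (G' (H b) + H' b')) = 0 ∧
      (∀ β : B, (β : Module.Dual K 𝒢) (T' (G' (H b) + H' b')) = (b : Module.Dual K B) β) ∧
      (∀ β : B', (β : Module.Dual K F) (G' (H b) + H' b') = (b' : Module.Dual K B') β) := by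
  intro b b'
  have key : T' (G' (H b) + H' b') = H b := by
    have h1 : T' (G' (H b)) = H b := congrFun (congrArg DFunLike.coe hG'1) (H b)
    simp [map_add, h1, (hH' b').1]
  refine ⟨?_, ?_, ?_⟩
  · rw [key]; exact (hH b).1
  · intro β; rw [key]; exact (hH b).2 β
  · intro β
    have hmem : G' (H b) ∈ B'.dualCoannihilator := hG'2 ▸ LinearMap.mem_range_self G' (H b)
    have h0 : (β : Module.Dual K F) (G' (H b)) = 0 := by
      rw [Submodule.mem_dualCoannihilator] at hmem
      exact hmem β β.2
    simp [map_add, h0, (hH' b').2 β]
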